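/- If every node of a hypergraph has degree at least 1 and every hyperedge has cardinality at least 1, then the operator norm (largest singular value) of L_ve = D_v^{-1/2} H D_e^{-1/2} is at most 1. -/
import Mathlib

open Matrix

noncomputable def opNorm {m n : Type*} [Fintype m] [Fintype n] [DecidableEq n]
    (M : Matrix m n ℝ) : ℝ :=
  ‖LinearMap.toContinuousLinearMap (Matrix.toEuclideanLin M)‖


theorem aux_sum_sq_le {n m : ℕ}
    (H : Matrix (Fin n) (Fin m) ℝ)
    (hH : ∀ i e, H i e = 0 ∨ H i e = 1)
    (dv : Fin n → ℝ) (de : Fin m → ℝ)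
    (hdv_def : ∀ i, dv i = ∑ e, H i e)
    (hde_def : ∀ e, de e = ∑ i, H i e)
    (hdv : ∀ i, 1 ≤ dv i) (hde : ∀ e, 1 ≤ de e) :
    ∀ (x : EuclideanSpace ℝ (Fin m)),
      ∑ i, (∑ e, ((Matrix.diagonal (fun i => 1 / Real.sqrt (dv i)) * H *
      Matrix.diagonal (fun e => 1 / Real.sqrt (de e))) i e * x e)) ^ 2 ≤ ∑ e, (x e)^2 := by
  intro x
  set M := Matrix.diagonal (fun i => 1 / Real.sqrt (dv i)) * H *
      Matrix.diagonal (fun e => 1 / Real.sqrt (de e)) with hM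
  have hHnn : ∀ i e, 0 ≤ H i e := by
    intro i e; rcases hH i e with h | h <;> simp [h]
  have hHsq : ∀ i e, H i e ^ 2 = H i e := by
    intro i e; rcases hH i e with h | h <;> simp [h]
  have hdvpos : ∀ i, 0 < dv i := fun i => lt_of_lt_of_le one_pos (hdv i)
  have hdepos : ∀ e, 0 < de e := fun e => lt_of_lt_of_le one_pos (hde e)
  have hMe : ∀ i e, M i e = H i e / (Real.sqrt (dv i) * Real.sqrt (de e)) := by
    intro i e
    rw [hM, Matrix.mul_apply]
    simp [Matrix.diagonal_apply, Finset.sum_ite_eq, Matrix.mul_apply]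
    ring
  have key : ∀ i, (∑ e, M i e * x e) ^ 2 ≤ ∑ e, H i e * (x e)^2 / de e := by
    intro i
    have cs := Finset.sum_mul_sq_le_sq_mul_sq Finset.univ
      (fun e => Real.sqrt (H i e) / Real.sqrt (dv i))
      (fun e => Real.sqrt (H i e) * x e / Real.sqrt (de e))
    have h1 : ∀ e, (Real.sqrt (H i e) / Real.sqrt (dv i)) *
        (Real.sqrt (H i e) * x e / Real.sqrt (de e)) = M i e * x e := by
      intro e
      rw [hMe]
      rw [div_mul_div_comm]
      rw [show Real.sqrt (H i e) * (Real.sqrt (H i e) * x e)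
          = H i e * x e by rw [← mul_assoc, Real.mul_self_sqrt (hHnn i e)]]
      ring
    have h2 : ∀ e, (Real.sqrt (H i e) / Real.sqrt (dv i)) ^ 2 = H i e / dv i := by
      intro e
      rw [div_pow, Real.sq_sqrt (hHnn i e), Real.sq_sqrt (hdvpos i).le]
    have h3 : ∀ e, (Real.sqrt (H i e) * x e / Real.sqrt (de e)) ^ 2
        = H i e * (x e)^2 / de e := by
      intro e
      rw [div_pow, mul_pow, Real.sq_sqrt (hHnn i e), Real.sq_sqrt (hdepos e).le]
    simp only [h1, h2, h3] at cs
    have hsum1 : ∑ e, H i e / dv i = 1 := by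
      rw [← Finset.sum_div, ← hdv_def i, div_self (hdvpos i).ne']
    rwa [hsum1, one_mul] at cs
  calc ∑ i, (∑ e, M i e * x e) ^ 2
      ≤ ∑ i, ∑ e, H i e * (x e)^2 / de e := Finset.sum_le_sum fun i _ => key i
    _ = ∑ e, (x e)^2 := by
        rw [Finset.sum_comm]
        refine Finset.sum_congr rfl fun e _ => ?_
        simp only [mul_div_assoc]
        rw [← Finset.sum_mul, ← hde_def e]
        rw [mul_comm]; exact div_mul_cancel₀ _ (hdepos e).ne'

theorem normalized_incidence_opNorm_le_one {n m : ℕ}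
    (H : Matrix (Fin n) (Fin m) ℝ)
    (hH : ∀ i e, H i e = 0 ∨ H i e = 1)
    (dv : Fin n → ℝ) (de : Fin m → ℝ)
    (hdv_def : ∀ i, dv i = ∑ e, H i e)
    (hde_def : ∀ e, de e = ∑ i, H i e)
    (hdv : ∀ i, 1 ≤ dv i) (hde : ∀ e, 1 ≤ de e) :
    opNorm (Matrix.diagonal (fun i => 1 / Real.sqrt (dv i)) * H *
      Matrix.diagonal (fun e => 1 / Real.sqrt (de e))) ≤ 1 := by
  rw [opNorm]
  apply ContinuousLinearMap.opNorm_le_bound _ zero_le_one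
  intro x
  rw [one_mul]
  set M := Matrix.diagonal (fun i => 1 / Real.sqrt (dv i)) * H *
      Matrix.diagonal (fun e => 1 / Real.sqrt (de e)) with hM
  have hcoe : (LinearMap.toContinuousLinearMap (Matrix.toEuclideanLin M)) x
      = Matrix.toEuclideanLin M x := rfl
  rw [hcoe, EuclideanSpace.norm_eq, EuclideanSpace.norm_eq]
  apply Real.sqrt_le_sqrt
  have happ : ∀ i, (Matrix.toEuclideanLin M x) i = ∑ e, M i e * x e := by
    intro i
    simp [Matrix.toEuclideanLin_apply, Matrix.mulVec, dotProduct]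
  simp only [Real.norm_eq_abs, sq_abs, happ]
  exact aux_sum_sq_le H hH dv de hdv_def hde_def hdv hde x
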